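/- (Discrete gradient structure of the L1 formula.) For any real sequence v_1, …, v_n with 1 ≤ n ≤ N, it holds that 2 v_n Σ_{j=1}^{n} a^{(n)}_{n−j} v_j ≥ a^{(n)}_0 v_n² + Σ_{k=1}^{n} p^{(n)}_{n−k} (Σ_{j=1}^{k} a^{(k)}_{k−j} v_j)² − Σ_{k=1}^{n−1} p^{(n−1)}_{n−1−k} (Σ_{j=1}^{k} a^{(k)}_{k−j} v_j)². -/

import Mathlib

open scoped BigOperators
open MeasureTheory intervalIntegral

/-- ω_β(t) = t^{β-1}/Γ(β) -/
noncomputable def omegaK (β t : ℝ) : ℝ := t ^ (β - 1) / Real.Gamma β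

/-- variable-step L1 kernel: `aK α t n k = a^{(n)}_{n-k}` for `1 ≤ k ≤ n`. -/
noncomputable def aK (α : ℝ) (t : ℕ → ℝ) (n k : ℕ) : ℝ :=
  (1 / (t k - t (k - 1))) * ∫ s in (t (k - 1))..(t k), omegaK (1 - α) (t n - s)

/-- DCC kernel: `pK α t n m = p^{(n)}_m`, i.e. `p^{(n)}_{n-k} = pK α t n (n-k)`;
`p^{(n)}_0 = 1/a^{(n)}_0` and
`p^{(n)}_{n-k} = (1/a^{(k)}_0) Σ_{j=k+1}^n (a^{(j)}_{j-k-1} - a^{(j)}_{j-k}) p^{(n)}_{n-j}`. -/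
noncomputable def pK (α : ℝ) (t : ℕ → ℝ) (n : ℕ) : ℕ → ℝ
  | 0 => 1 / aK α t n n
  | m + 1 =>
      (1 / aK α t (n - m - 1) (n - m - 1)) *
        ∑ i ∈ (Finset.range (m + 1)).attach,
          (aK α t (n - i.1) (n - m) - aK α t (n - i.1) (n - m - 1)) * pK α t n i.1
  decreasing_by exact Finset.mem_range.mp i.2

section aux
variable {α : ℝ} (hα0 : 0 < α) (hα1 : α < 1)

lemma omegaK_eq (x : ℝ) : omegaK (1 - α) x = x ^ (-α) / Real.Gamma (1 - α) := by
  unfold omegaK; ring_nf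

include hα1 in
lemma omega_intble (c lo hi : ℝ) :
    IntervalIntegrable (fun s => omegaK (1 - α) (c - s)) volume lo hi := by
  have h : IntervalIntegrable (fun x : ℝ => x ^ (-α)) volume (c - lo) (c - hi) :=
    intervalIntegrable_rpow' (by linarith)
  have := (h.comp_sub_left c).div_const (Real.Gamma (1 - α))
  simp only [sub_sub_cancel] at this
  simpa only [omegaK_eq] using this

include hα0 hα1 in
lemma omega_pos {c x : ℝ} (h : x < c) : 0 < omegaK (1 - α) (c - x) := by
  rw [omegaK_eq]
  exact div_pos (Real.rpow_pos_of_pos (by linarith) _) (Real.Gamma_pos_of_pos (by linarith))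

end aux

section aux2
variable {α : ℝ}

lemma integral_mono_except {F G : ℝ → ℝ} {lo hi : ℝ} (hle : lo ≤ hi)
    (hF : IntervalIntegrable F volume lo hi) (hG : IntervalIntegrable G volume lo hi)
    (h : ∀ s, lo ≤ s → s < hi → F s ≤ G s) :
    (∫ s in lo..hi, F s) ≤ ∫ s in lo..hi, G s := by
  apply intervalIntegral.integral_mono_ae_restrict hle hF hG
  have h1 : ∀ᵐ s ∂(volume.restrict (Set.Icc lo hi)), s ≠ hi := by
    refine MeasureTheory.ae_restrict_of_ae ?_
    rw [MeasureTheory.ae_iff]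
    have : {s : ℝ | ¬ s ≠ hi} = {hi} := by ext s; simp
    rw [this]
    exact Real.volume_singleton
  have h2 : ∀ᵐ s ∂(volume.restrict (Set.Icc lo hi)), s ∈ Set.Icc lo hi :=
    MeasureTheory.ae_restrict_mem measurableSet_Icc
  filter_upwards [h1, h2] with s hs1 hs2
  exact h s hs2.1 (lt_of_le_of_ne hs2.2 hs1)

variable (hα0 : 0 < α) (hα1 : α < 1)
include hα0 hα1

lemma pt_near {c d B s : ℝ} (hsB : B ≤ s) (hsc : s < c) (hcd : c ≤ d) (hB : B < c) :
    (c - B) ^ (-α) * omegaK (1 - α) (d - s) ≤ (d - B) ^ (-α) * omegaK (1 - α) (c - s) := by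
  rw [omegaK_eq, omegaK_eq, ← mul_div_assoc, ← mul_div_assoc]
  have hΓ : 0 < Real.Gamma (1 - α) := Real.Gamma_pos_of_pos (by linarith)
  apply div_le_div_of_nonneg_right ?_ hΓ.le
  rw [← Real.mul_rpow (by linarith) (by linarith), ← Real.mul_rpow (by linarith) (by linarith)]
  apply Real.rpow_le_rpow_of_nonpos
  · nlinarith
  · nlinarith
  · linarith

lemma pt_far {c d B s : ℝ} (hsB : s ≤ B) (hcd : c ≤ d) (hB : B < c) :
    (d - B) ^ (-α) * omegaK (1 - α) (c - s) ≤ (c - B) ^ (-α) * omegaK (1 - α) (d - s) := by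
  rw [omegaK_eq, omegaK_eq, ← mul_div_assoc, ← mul_div_assoc]
  have hΓ : 0 < Real.Gamma (1 - α) := Real.Gamma_pos_of_pos (by linarith)
  apply div_le_div_of_nonneg_right ?_ hΓ.le
  rw [← Real.mul_rpow (by linarith) (by linarith), ← Real.mul_rpow (by linarith) (by linarith)]
  apply Real.rpow_le_rpow_of_nonpos
  · nlinarith
  · nlinarith
  · linarith

end aux2

section aux3
variable {α : ℝ} {t : ℕ → ℝ} (hα0 : 0 < α) (hα1 : α < 1)
include hα0 hα1

lemma aK_pos {m k : ℕ} (hlt : t (k - 1) < t k) (hle : t k ≤ t m) : 0 < aK α t m k := by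
  unfold aK
  have hint := omega_intble hα1 (t m) (t (k - 1)) (t k)
  have hpos : 0 < ∫ s in t (k - 1)..t k, omegaK (1 - α) (t m - s) :=
    intervalIntegral.intervalIntegral_pos_of_pos_on hint
      (fun x hx => omega_pos hα0 hα1 (lt_of_lt_of_le hx.2 hle)) hlt
  exact mul_pos (by rw [one_div]; exact inv_pos.mpr (by linarith)) hpos

lemma aK_mono_n {j k n : ℕ} (h1 : t (j - 1) < t j) (hjk : t j ≤ t k) (hkn : t k ≤ t n) :
    aK α t n j ≤ aK α t k j := by
  unfold aK
  have hτ : (0:ℝ) ≤ 1 / (t j - t (j - 1)) := by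
    rw [one_div]; exact (inv_pos.mpr (by linarith)).le
  apply mul_le_mul_of_nonneg_left ?_ hτ
  apply integral_mono_except h1.le (omega_intble hα1 _ _ _) (omega_intble hα1 _ _ _)
  intro s hs1 hs2
  rw [omegaK_eq, omegaK_eq]
  have hcs : 0 < t k - s := by linarith
  apply div_le_div_of_nonneg_right ?_ (Real.Gamma_pos_of_pos (by linarith)).le
  exact Real.rpow_le_rpow_of_nonpos hcs (by linarith) (by linarith)

lemma aK_ratio {j k n : ℕ} (h0 : t (j - 1) < t j) (h1 : t j < t (j + 1))
    (h2 : t (j + 1) ≤ t k) (h3 : t k ≤ t n) :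
    aK α t k j * aK α t n (j + 1) ≤ aK α t n j * aK α t k (j + 1) := by
  have hidx : (j + 1 : ℕ) - 1 = j := rfl
  unfold aK
  rw [hidx]
  set B := t j
  set lo := t (j - 1)
  set hi := t (j + 1)
  set c := t k
  set d := t n
  have hBc : B < c := lt_of_lt_of_le h1 h2
  have hrc : 0 < (c - B) ^ (-α) := Real.rpow_pos_of_pos (by linarith) _
  have hrd : 0 < (d - B) ^ (-α) := Real.rpow_pos_of_pos (by linarith) _
  set I1 : ℝ := ∫ s in lo..B, omegaK (1 - α) (c - s) with hI1
  set I1' : ℝ := ∫ s in lo..B, omegaK (1 - α) (d - s) with hI1'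
  set I2 : ℝ := ∫ s in B..hi, omegaK (1 - α) (c - s) with hI2
  set I2' : ℝ := ∫ s in B..hi, omegaK (1 - α) (d - s) with hI2'
  have hI1nn : 0 ≤ I1 :=
    (intervalIntegral.intervalIntegral_pos_of_pos_on (omega_intble hα1 _ _ _)
      (fun x hx => omega_pos hα0 hα1 (by linarith [hx.2])) h0).le
  have hI2nn : 0 ≤ I2 :=
    (intervalIntegral.intervalIntegral_pos_of_pos_on (omega_intble hα1 _ _ _)
      (fun x hx => omega_pos hα0 hα1 (by linarith [hx.2])) h1).le
  -- Claim A
  have hA : (c - B) ^ (-α) * I2' ≤ (d - B) ^ (-α) * I2 := by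
    rw [hI2, hI2', ← intervalIntegral.integral_const_mul, ← intervalIntegral.integral_const_mul]
    apply integral_mono_except h1.le ((omega_intble hα1 _ _ _).const_mul _)
      ((omega_intble hα1 _ _ _).const_mul _)
    intro s hs1 hs2
    exact pt_near hα0 hα1 hs1 (by linarith) h3 hBc
  -- Claim B
  have hB : (d - B) ^ (-α) * I1 ≤ (c - B) ^ (-α) * I1' := by
    rw [hI1, hI1', ← intervalIntegral.integral_const_mul, ← intervalIntegral.integral_const_mul]
    apply intervalIntegral.integral_mono_on h0.le ((omega_intble hα1 _ _ _).const_mul _)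
      ((omega_intble hα1 _ _ _).const_mul _)
    intro s hs
    exact pt_far hα0 hα1 hs.2 h3 hBc
  have key : I1 * I2' ≤ I1' * I2 := by
    have k1 : I1 * ((c - B) ^ (-α) * I2') ≤ I1 * ((d - B) ^ (-α) * I2) :=
      mul_le_mul_of_nonneg_left hA hI1nn
    have k2 : (d - B) ^ (-α) * I1 * I2 ≤ (c - B) ^ (-α) * I1' * I2 :=
      mul_le_mul_of_nonneg_right hB hI2nn
    have : (c - B) ^ (-α) * (I1 * I2') ≤ (c - B) ^ (-α) * (I1' * I2) := by nlinarith
    exact le_of_mul_le_mul_left this hrc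
  have hτ1 : (0:ℝ) < 1 / (B - lo) := by rw [one_div]; exact inv_pos.mpr (by linarith)
  have hτ2 : (0:ℝ) < 1 / (hi - B) := by rw [one_div]; exact inv_pos.mpr (by linarith)
  calc 1 / (B - lo) * I1 * (1 / (hi - B) * I2')
      = (1 / (B - lo)) * (1 / (hi - B)) * (I1 * I2') := by ring
    _ ≤ (1 / (B - lo)) * (1 / (hi - B)) * (I1' * I2) := by
        apply mul_le_mul_of_nonneg_left key (by positivity)
    _ = 1 / (B - lo) * I1' * (1 / (hi - B) * I2) := by ring

end aux3

section dcc
variable (α : ℝ) (t : ℕ → ℝ)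

lemma pK_succ (m j : ℕ) (hj : j + 1 ≤ m) :
    pK α t m (m - j) = (1 / aK α t j j) *
      ∑ k ∈ Finset.Icc (j + 1) m, (aK α t k (j + 1) - aK α t k j) * pK α t m (m - k) := by
  have e : m - j = (m - j - 1) + 1 := by omega
  rw [e, pK]
  have e1 : m - (m - j - 1) - 1 = j := by omega
  have e2 : m - (m - j - 1) = j + 1 := by omega
  rw [e1, e2]
  congr 1
  rw [← e]
  rw [Finset.sum_attach (Finset.range (m - j))
    (fun i => (aK α t (m - i) (j + 1) - aK α t (m - i) j) * pK α t m i)]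
  refine Finset.sum_nbij' (fun i => m - i) (fun k => m - k) ?_ ?_ ?_ ?_ ?_
  · intro i hi; simp only [Finset.mem_range] at hi; simp only [Finset.mem_Icc]; omega
  · intro k hk; simp only [Finset.mem_Icc] at hk; simp only [Finset.mem_range]; omega
  · intro i hi; simp only [Finset.mem_range] at hi; show m - (m - i) = i; omega
  · intro k hk; simp only [Finset.mem_Icc] at hk; show m - (m - k) = k; omega
  · intro i hi; simp only [Finset.mem_range] at hi
    have : m - (m - i) = i := by omega
    rw [this]

lemma dcc (m : ℕ) (ha : ∀ k, 1 ≤ k → k ≤ m → aK α t k k ≠ 0) :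
    ∀ d j, j + d = m → 1 ≤ j →
      ∑ k ∈ Finset.Icc j m, pK α t m (m - k) * aK α t k j = 1 := by
  intro d
  induction d with
  | zero =>
    intro j hjd hj1
    have hjm : j = m := by omega
    subst hjm
    rw [Finset.Icc_self, Finset.sum_singleton, Nat.sub_self]
    simp only [pK]
    field_simp [ha j hj1 (by omega)]
  | succ d ih =>
    intro j hjd hj1
    have hjm : j + 1 ≤ m := by omega
    have hins : Finset.Icc j m = insert j (Finset.Icc (j + 1) m) := by
      ext x; simp only [Finset.mem_Icc, Finset.mem_insert]; omega
    rw [hins, Finset.sum_insert (by simp only [Finset.mem_Icc]; omega)]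
    have hp : pK α t m (m - j) * aK α t j j =
        ∑ k ∈ Finset.Icc (j + 1) m, (aK α t k (j + 1) - aK α t k j) * pK α t m (m - k) := by
      rw [pK_succ α t m j hjm]
      field_simp [ha j hj1 (by omega)]
    calc pK α t m (m - j) * aK α t j j + ∑ k ∈ Finset.Icc (j + 1) m, pK α t m (m - k) * aK α t k j
        = ∑ k ∈ Finset.Icc (j + 1) m, ((aK α t k (j + 1) - aK α t k j) * pK α t m (m - k)
            + pK α t m (m - k) * aK α t k j) := by rw [hp, Finset.sum_add_distrib]
      _ = ∑ k ∈ Finset.Icc (j + 1) m, pK α t m (m - k) * aK α t k (j + 1) := by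
          apply Finset.sum_congr rfl; intro k _; ring
      _ = 1 := ih (j + 1) (by omega) (by omega)

end dcc


/-- Lemma 3.1, discrete gradient structure of the L1 formula:
for any real sequence `v_1,…,v_n` with `1 ≤ n ≤ N`,
`2 v_n Σ_{j=1}^n a^{(n)}_{n-j} v_j ≥ a^{(n)}_0 v_n² + Σ_{k=1}^n p^{(n)}_{n-k} (Σ_{j=1}^k a^{(k)}_{k-j} v_j)²
 - Σ_{k=1}^{n-1} p^{(n-1)}_{n-1-k} (Σ_{j=1}^k a^{(k)}_{k-j} v_j)²`.
Here `a^{(n)}_{n-j} = aK α t n j`, `a^{(n)}_0 = aK α t n n`, `p^{(n)}_{n-k} = pK α t n (n-k)`. -/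

theorem L1_discrete_gradient_structure
    (N : ℕ) (α : ℝ) (hα : 0 < α ∧ α < 1) (T : ℝ)
    (t : ℕ → ℝ) (ht0 : t 0 = 0) (htN : t N = T)
    (htmono : ∀ k, k < N → t k < t (k + 1))
    (n : ℕ) (hn1 : 1 ≤ n) (hnN : n ≤ N) (v : ℕ → ℝ) :
    2 * v n * ∑ j ∈ Finset.Icc 1 n, aK α t n j * v j ≥
      aK α t n n * (v n) ^ 2
        + ∑ k ∈ Finset.Icc 1 n,
            pK α t n (n - k) * (∑ j ∈ Finset.Icc 1 k, aK α t k j * v j) ^ 2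
        - ∑ k ∈ Finset.Icc 1 (n - 1),
            pK α t (n - 1) (n - 1 - k) * (∑ j ∈ Finset.Icc 1 k, aK α t k j * v j) ^ 2 := by
  obtain ⟨hα0, hα1⟩ := hα
  -- mesh monotonicity
  have htlt : ∀ j, j ≤ N → ∀ i, i < j → t i < t j := by
    intro j
    induction j with
    | zero => intro _ i hi; omega
    | succ j ih =>
      intro hN i hi
      rcases Nat.lt_or_ge i j with h | h
      · exact (ih (by omega) i h).trans (htmono j (by omega))
      · have : i = j := by omega
        subst this; exact htmono i (by omega)
  have htle : ∀ i j, i ≤ j → j ≤ N → t i ≤ t j := by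
    intro i j hij hjN
    rcases Nat.lt_or_ge i j with h | h
    · exact (htlt j hjN i h).le
    · have : i = j := by omega
      subst this; exact le_rfl
  have hApos : ∀ k m : ℕ, 1 ≤ k → k ≤ m → m ≤ N → 0 < aK α t m k := by
    intro k m h1 h2 h3
    exact aK_pos hα0 hα1 (htlt k (by omega) (k - 1) (by omega)) (htle k m h2 h3)
  have ha0 : 0 < aK α t n n := hApos n n hn1 le_rfl hnN
  -- DCC identities
  have hdccn : ∀ j, 1 ≤ j → j ≤ n →
      ∑ k ∈ Finset.Icc j n, pK α t n (n - k) * aK α t k j = 1 := by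
    intro j h1 h2
    exact dcc α t n (fun k hk1 hk2 => (hApos k k hk1 le_rfl (hk2.trans hnN)).ne')
      (n - j) j (by omega) h1
  have hdccn1 : ∀ j, 1 ≤ j → j ≤ n - 1 →
      ∑ k ∈ Finset.Icc j (n - 1), pK α t (n - 1) (n - 1 - k) * aK α t k j = 1 := by
    intro j h1 h2
    exact dcc α t (n - 1) (fun k hk1 hk2 => (hApos k k hk1 le_rfl (by omega)).ne')
      (n - 1 - j) j (by omega) h1
  have hPn : pK α t n 0 = 1 / aK α t n n := by simp [pK]
  -- theta
  set θ : ℕ → ℝ := fun k =>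
    aK α t n n * (pK α t (n - 1) (n - 1 - k) - pK α t n (n - k)) with hθ
  -- the triangular system for theta
  have hID : ∀ j, 1 ≤ j → j ≤ n - 1 →
      ∑ k ∈ Finset.Icc j (n - 1), θ k * aK α t k j = aK α t n j := by
    intro j h1 h2
    have hsplit : Finset.Icc j n = insert n (Finset.Icc j (n - 1)) := by
      ext x; simp only [Finset.mem_Icc, Finset.mem_insert]; omega
    have h3 := hdccn j h1 (by omega)
    rw [hsplit, Finset.sum_insert (by simp only [Finset.mem_Icc]; omega), Nat.sub_self, hPn] at h3
    have h4 : ∑ k ∈ Finset.Icc j (n - 1), pK α t n (n - k) * aK α t k j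
        = 1 - 1 / aK α t n n * aK α t n j := by linarith
    have h5 := hdccn1 j h1 h2
    calc ∑ k ∈ Finset.Icc j (n - 1), θ k * aK α t k j
        = aK α t n n * ((∑ k ∈ Finset.Icc j (n - 1), pK α t (n - 1) (n - 1 - k) * aK α t k j)
            - ∑ k ∈ Finset.Icc j (n - 1), pK α t n (n - k) * aK α t k j) := by
          rw [← Finset.sum_sub_distrib, Finset.mul_sum]
          apply Finset.sum_congr rfl; intro k _; rw [hθ]; ring
      _ = aK α t n j := by rw [h5, h4]; field_simp; ring
  -- nonnegativity of theta
  have hNN : ∀ k, 1 ≤ k → k ≤ n - 1 → 0 ≤ θ k := by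
    have H : ∀ d j, 1 ≤ j → j ≤ n - 1 → (n - 1) - j = d → 0 ≤ θ j := by
      intro d
      induction d using Nat.strong_induction_on with
      | _ d ih =>
        intro j hj1 hj2 hjd
        have hIDj := hID j hj1 hj2
        have hsplit : Finset.Icc j (n - 1) = insert j (Finset.Icc (j + 1) (n - 1)) := by
          ext x; simp only [Finset.mem_Icc, Finset.mem_insert]; omega
        rw [hsplit, Finset.sum_insert (by simp only [Finset.mem_Icc]; omega)] at hIDj
        have hbound : ∑ k ∈ Finset.Icc (j + 1) (n - 1), θ k * aK α t k j ≤ aK α t n j := by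
          rcases Nat.lt_or_ge (n - 1) (j + 1) with h | h
          · rw [Finset.Icc_eq_empty (by omega), Finset.sum_empty]
            exact (hApos j n hj1 (by omega) hnN).le
          · have hsys := hID (j + 1) (by omega) h
            have hterm : ∀ k ∈ Finset.Icc (j + 1) (n - 1),
                (θ k * aK α t k j) * aK α t n (j + 1) ≤ (θ k * aK α t k (j + 1)) * aK α t n j := by
              intro k hk
              simp only [Finset.mem_Icc] at hk
              have hθk : 0 ≤ θ k := ih ((n - 1) - k) (by omega) k (by omega) (by omega) rfl
              have hr := aK_ratio hα0 hα1 (t := t) (j := j) (k := k) (n := n)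
                (htlt j (by omega) (j - 1) (by omega)) (htlt (j + 1) (by omega) j (by omega))
                (htle (j + 1) k hk.1 (by omega)) (htle k n (by omega) hnN)
              calc (θ k * aK α t k j) * aK α t n (j + 1)
                  = θ k * (aK α t k j * aK α t n (j + 1)) := by ring
                _ ≤ θ k * (aK α t n j * aK α t k (j + 1)) := mul_le_mul_of_nonneg_left hr hθk
                _ = (θ k * aK α t k (j + 1)) * aK α t n j := by ring
            have hs : (∑ k ∈ Finset.Icc (j + 1) (n - 1), θ k * aK α t k j) * aK α t n (j + 1)
                ≤ (∑ k ∈ Finset.Icc (j + 1) (n - 1), θ k * aK α t k (j + 1)) * aK α t n j := by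
              rw [Finset.sum_mul, Finset.sum_mul]
              exact Finset.sum_le_sum hterm
            rw [hsys] at hs
            have hpos : 0 < aK α t n (j + 1) := hApos (j + 1) n (by omega) (by omega) hnN
            have hpos2 : 0 < aK α t n j := hApos j n hj1 (by omega) hnN
            nlinarith
        have hjj : 0 < aK α t j j := hApos j j hj1 le_rfl (by omega)
        nlinarith
    intro k h1 h2; exact H ((n - 1) - k) k h1 h2 rfl
  -- sum of theta at most one
  have hSUM : ∑ k ∈ Finset.Icc 1 (n - 1), θ k ≤ 1 := by
    rcases Nat.lt_or_ge n 2 with h | h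
    · rw [Finset.Icc_eq_empty (by omega), Finset.sum_empty]; norm_num
    · have hsys := hID 1 le_rfl (by omega)
      have hterm : ∀ k ∈ Finset.Icc 1 (n - 1), θ k * aK α t n 1 ≤ θ k * aK α t k 1 := by
        intro k hk
        simp only [Finset.mem_Icc] at hk
        apply mul_le_mul_of_nonneg_left ?_ (hNN k hk.1 hk.2)
        exact aK_mono_n hα0 hα1 (by simpa using htlt 1 (by omega) 0 (by omega))
          (htle 1 k hk.1 (by omega)) (htle k n (by omega) hnN)
      have hs : (∑ k ∈ Finset.Icc 1 (n - 1), θ k) * aK α t n 1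
          ≤ ∑ k ∈ Finset.Icc 1 (n - 1), θ k * aK α t k 1 := by
        rw [Finset.sum_mul]
        exact Finset.sum_le_sum hterm
      rw [hsys] at hs
      have hpos : 0 < aK α t n 1 := hApos 1 n le_rfl hn1 hnN
      nlinarith
  -- abbreviation for partial L1 sums
  set G : ℕ → ℝ := fun k => ∑ j ∈ Finset.Icc 1 k, aK α t k j * v j with hGdef
  show 2 * v n * G n ≥
      aK α t n n * (v n) ^ 2
        + ∑ k ∈ Finset.Icc 1 n, pK α t n (n - k) * (G k) ^ 2
        - ∑ k ∈ Finset.Icc 1 (n - 1), pK α t (n - 1) (n - 1 - k) * (G k) ^ 2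
  set S : ℝ := ∑ j ∈ Finset.Icc 1 (n - 1), aK α t n j * v j with hSdef
  -- G n = S + a0 v n
  have hGn : G n = S + aK α t n n * v n := by
    rw [hGdef, hSdef]
    have hsplit : Finset.Icc 1 n = insert n (Finset.Icc 1 (n - 1)) := by
      ext x; simp only [Finset.mem_Icc, Finset.mem_insert]; omega
    simp only
    rw [hsplit, Finset.sum_insert (by simp only [Finset.mem_Icc]; omega)]
    ring
  -- S as a theta-combination of the G k
  have hSg : S = ∑ k ∈ Finset.Icc 1 (n - 1), θ k * G k := by
    rw [hSdef]
    calc ∑ j ∈ Finset.Icc 1 (n - 1), aK α t n j * v j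
        = ∑ j ∈ Finset.Icc 1 (n - 1),
            (∑ k ∈ Finset.Icc j (n - 1), θ k * aK α t k j) * v j := by
          apply Finset.sum_congr rfl; intro j hj
          simp only [Finset.mem_Icc] at hj
          rw [hID j hj.1 hj.2]
      _ = ∑ j ∈ Finset.Icc 1 (n - 1), ∑ k ∈ Finset.Icc j (n - 1), θ k * aK α t k j * v j := by
          apply Finset.sum_congr rfl; intro j _; rw [Finset.sum_mul]
      _ = ∑ k ∈ Finset.Icc 1 (n - 1), ∑ j ∈ Finset.Icc 1 k, θ k * aK α t k j * v j := by
          apply Finset.sum_comm'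
          intro k j; simp only [Finset.mem_Icc]; omega
      _ = ∑ k ∈ Finset.Icc 1 (n - 1), θ k * G k := by
          apply Finset.sum_congr rfl; intro k _
          rw [hGdef, Finset.mul_sum]
          apply Finset.sum_congr rfl; intro j _; ring
  -- Cauchy-Schwarz step
  have hkey : S ^ 2 ≤ ∑ k ∈ Finset.Icc 1 (n - 1), θ k * (G k) ^ 2 := by
    have hcs : (∑ k ∈ Finset.Icc 1 (n - 1), θ k * G k) ^ 2 ≤
        (∑ k ∈ Finset.Icc 1 (n - 1), θ k) * ∑ k ∈ Finset.Icc 1 (n - 1), θ k * (G k) ^ 2 := by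
      apply Finset.sum_sq_le_sum_mul_sum_of_sq_eq_mul
      · intro k hk; simp only [Finset.mem_Icc] at hk; exact hNN k hk.1 hk.2
      · intro k hk; simp only [Finset.mem_Icc] at hk
        exact mul_nonneg (hNN k hk.1 hk.2) (sq_nonneg _)
      · intro k _; ring
    have hnn : 0 ≤ ∑ k ∈ Finset.Icc 1 (n - 1), θ k * (G k) ^ 2 := by
      apply Finset.sum_nonneg; intro k hk; simp only [Finset.mem_Icc] at hk
      exact mul_nonneg (hNN k hk.1 hk.2) (sq_nonneg _)
    calc S ^ 2 = (∑ k ∈ Finset.Icc 1 (n - 1), θ k * G k) ^ 2 := by rw [hSg]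
      _ ≤ (∑ k ∈ Finset.Icc 1 (n - 1), θ k) * ∑ k ∈ Finset.Icc 1 (n - 1), θ k * (G k) ^ 2 := hcs
      _ ≤ 1 * ∑ k ∈ Finset.Icc 1 (n - 1), θ k * (G k) ^ 2 := by
          exact mul_le_mul_of_nonneg_right hSUM hnn
      _ = _ := one_mul _
  -- split the P-sum
  have hsplitP : ∑ k ∈ Finset.Icc 1 n, pK α t n (n - k) * (G k) ^ 2
      = 1 / aK α t n n * (G n) ^ 2
        + ∑ k ∈ Finset.Icc 1 (n - 1), pK α t n (n - k) * (G k) ^ 2 := by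
    have hsplit : Finset.Icc 1 n = insert n (Finset.Icc 1 (n - 1)) := by
      ext x; simp only [Finset.mem_Icc, Finset.mem_insert]; omega
    rw [hsplit, Finset.sum_insert (by simp only [Finset.mem_Icc]; omega), Nat.sub_self, hPn]
  -- difference of the two kernel sums
  have hdiff : (∑ k ∈ Finset.Icc 1 (n - 1), pK α t (n - 1) (n - 1 - k) * (G k) ^ 2)
      - ∑ k ∈ Finset.Icc 1 (n - 1), pK α t n (n - k) * (G k) ^ 2
      = 1 / aK α t n n * ∑ k ∈ Finset.Icc 1 (n - 1), θ k * (G k) ^ 2 := by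
    rw [← Finset.sum_sub_distrib, Finset.mul_sum]
    apply Finset.sum_congr rfl; intro k _
    rw [hθ]; simp only; field_simp
  -- final identity + inequality
  have hident : 2 * v n * G n - aK α t n n * (v n) ^ 2 - 1 / aK α t n n * (G n) ^ 2
      = - (1 / aK α t n n * S ^ 2) := by
    rw [hGn]; field_simp; ring
  have hfinal : 1 / aK α t n n * S ^ 2
      ≤ 1 / aK α t n n * ∑ k ∈ Finset.Icc 1 (n - 1), θ k * (G k) ^ 2 := by
    apply mul_le_mul_of_nonneg_left hkey
    positivity
  rw [ge_iff_le, hsplitP]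
  linarith [hdiff, hident, hfinal]
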